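/- Let (E, ρ) be a q-polymatroid and ρ* the dual rank function with respect to a non-degenerate symmetric bilinear form. Then the bidual satisfies ρ** = ρ, i.e., (ρ*)*(V) = ρ(V) for all subspaces V of E. -/

import Mathlib

open Module

theorem qpm_bidual_eq
    {𝔽 E : Type*} [Field 𝔽] [Fintype 𝔽] [AddCommGroup E] [Module 𝔽 E]
    [FiniteDimensional 𝔽 E] (ρ : Submodule 𝔽 E → ℚ)
    (hR1 : ∀ V : Submodule 𝔽 E, 0 ≤ ρ V ∧ ρ V ≤ (finrank 𝔽 V : ℚ))
    (hR2 : ∀ V W : Submodule 𝔽 E, V ≤ W → ρ V ≤ ρ W)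
    (hR3 : ∀ V W : Submodule 𝔽 E, ρ (V ⊔ W) + ρ (V ⊓ W) ≤ ρ V + ρ W)
    (B : LinearMap.BilinForm 𝔽 E) (hsymm : B.IsSymm) (hnd : B.Nondegenerate)
    (ρs ρss : Submodule 𝔽 E → ℚ)
    (hρs : ∀ V : Submodule 𝔽 E,
      ρs V = (finrank 𝔽 V : ℚ) + ρ (B.orthogonal V) - ρ (⊤ : Submodule 𝔽 E))
    (hρss : ∀ V : Submodule 𝔽 E,
      ρss V = (finrank 𝔽 V : ℚ) + ρs (B.orthogonal V) - ρs (⊤ : Submodule 𝔽 E)) :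
    ∀ V : Submodule 𝔽 E, ρss V = ρ V := by
  intro V
  have hrefl : B.IsRefl := hsymm.isRefl
  have htop : B.orthogonal ⊤ = ⊥ := LinearMap.BilinForm.orthogonal_top_eq_bot hnd
  have hρbot : ρ ⊥ = 0 := by
    have h1 := (hR1 ⊥).1
    have h2 := (hR1 ⊥).2
    simp [finrank_bot] at h2
    linarith
  have hoo := B.orthogonal_orthogonal hnd hrefl V
  have hfr : finrank 𝔽 (B.orthogonal V) = finrank 𝔽 E - finrank 𝔽 V :=
    LinearMap.BilinForm.finrank_orthogonal hnd V
  have hle : finrank 𝔽 V ≤ finrank 𝔽 E := Submodule.finrank_le V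
  have hfrQ : (finrank 𝔽 (B.orthogonal V) : ℚ) = (finrank 𝔽 E : ℚ) - (finrank 𝔽 V : ℚ) := by
    rw [hfr]; push_cast [hle]; ring
  rw [hρss, hρs, hρs, hoo, htop, hρbot, hfrQ, finrank_top]
  ring
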